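/- Let Γ be a countable group acting by measure-preserving measurable automorphisms on a standard probability space (Y, B_Y, μ), let G be a compact metrizable topological group on which Γ acts by continuous group automorphisms, and let σ : Γ × Y → G be a measurable cocycle, i.e., σ(γ₁γ₂, y) = σ(γ₁, γ₂y) · γ₁(σ(γ₂, y)) for all γ₁, γ₂ ∈ Γ and y ∈ Y. Then there exist a compact metrizable topological space Y', an action of Γ on Y' by homeomorphisms, a Γ-equivariant injective measurable map ψ : Y → Y' whose range is a Borel subset of Y' that is dense in Y', such that ψ is a Borel isomorphism onto its range, the pushforward measure ψ_*μ is a Γ-invariant Borel probability measure on Y', and there is a continuous map σ' : Γ × Y' → G satisfying the cocycle identity σ'(γ₁γ₂, y') = σ'(γ₁, γ₂y') · γ₁(σ'(γ₂, y')) and σ'(γ, ψ(y)) = σ(γ, y) for all γ ∈ Γ and y ∈ Y. -/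

import Mathlib

open MeasureTheory

noncomputable section

theorem auxPolishOfCompactMetrizable (X : Type*) [TopologicalSpace X] [CompactSpace X]
    [TopologicalSpace.MetrizableSpace X] : PolishSpace X := by
  letI := TopologicalSpace.metrizableSpaceMetric X
  infer_instance


/-- `(Y', ρ, ψ, σ')` is a topological model for the measurable cocycle `σ` over `(Y, μ)`:
`Y'` is a compact metrizable space with Borel measurable structure, `ρ` is an action of `Γ`
on `Y'` by homeomorphisms, `ψ` is an equivariant measurable injection of `Y` onto a dense
Borel subset of `Y'` which is a Borel isomorphism onto its range, the pushforward `ψ_*μ` is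
a `Γ`-invariant Borel probability measure, and `σ'` is a continuous cocycle extending `σ`. -/
def IsTopModel {Γ : Type*} [Group Γ] {Y : Type*} [MeasurableSpace Y] (μ : Measure Y)
    [MulAction Γ Y] {G : Type*} [Group G] [TopologicalSpace G] [MulDistribMulAction Γ G]
    (σ : Γ → Y → G) (Y' : Type) (topY' : TopologicalSpace Y')
    (measY' : MeasurableSpace Y') (ρ : Γ → Y' → Y') (ψ : Y → Y') (σ' : Γ → Y' → G) :
    Prop :=
  letI := topY'
  letI := measY'
  BorelSpace Y' ∧ CompactSpace Y' ∧ TopologicalSpace.MetrizableSpace Y' ∧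
  (∀ γ : Γ, Continuous (ρ γ)) ∧ ρ 1 = id ∧ (∀ γ₁ γ₂ : Γ, ρ (γ₁ * γ₂) = ρ γ₁ ∘ ρ γ₂) ∧
  Function.Injective ψ ∧ Measurable ψ ∧
  (∀ (γ : Γ) (y : Y), ψ (γ • y) = ρ γ (ψ y)) ∧
  MeasurableSet (Set.range ψ) ∧ Dense (Set.range ψ) ∧
  (∀ s : Set Y, MeasurableSet s → MeasurableSet (ψ '' s)) ∧
  IsProbabilityMeasure (Measure.map ψ μ) ∧
  (∀ γ : Γ, Measure.map (ρ γ) (Measure.map ψ μ) = Measure.map ψ μ) ∧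
  (∀ γ : Γ, Continuous (σ' γ)) ∧
  (∀ (γ₁ γ₂ : Γ) (y' : Y'), σ' (γ₁ * γ₂) y' = σ' γ₁ (ρ γ₂ y') * γ₁ • σ' γ₂ y') ∧
  (∀ (γ : Γ) (y : Y), σ' γ (ψ y) = σ γ y)

set_option maxHeartbeats 1000000 in
set_option synthInstance.maxHeartbeats 500000 in
/-- Lemma 6.7 (topological model): every measurable cocycle for a measure-preserving
action of a countable group `Γ` on a standard probability space, with values in a compact
metrizable group `G` on which `Γ` acts by continuous automorphisms, extends to a
continuous cocycle on a compact metrizable topological model. -/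
theorem stmt10 {Γ : Type*} [Group Γ] [Countable Γ]
    {Y : Type*} [MeasurableSpace Y] [StandardBorelSpace Y]
    (μ : Measure Y) [IsProbabilityMeasure μ]
    [MulAction Γ Y]
    (hmeas : ∀ γ : Γ, Measurable fun y : Y => γ • y)
    (hmp : ∀ γ : Γ, MeasurePreserving (fun y : Y => γ • y) μ μ)
    {G : Type*} [Group G] [TopologicalSpace G] [IsTopologicalGroup G] [CompactSpace G]
    [TopologicalSpace.MetrizableSpace G] [MeasurableSpace G] [BorelSpace G]
    [MulDistribMulAction Γ G] (hGcont : ∀ γ : Γ, Continuous fun g : G => γ • g)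
    (σ : Γ → Y → G) (hσmeas : ∀ γ : Γ, Measurable (σ γ))
    (hσ : ∀ (γ₁ γ₂ : Γ) (y : Y), σ (γ₁ * γ₂) y = σ γ₁ (γ₂ • y) * γ₁ • σ γ₂ y) :
    ∃ (Y' : Type) (topY' : TopologicalSpace Y') (measY' : MeasurableSpace Y')
      (ρ : Γ → Y' → Y') (ψ : Y → Y') (σ' : Γ → Y' → G),
      IsTopModel μ σ Y' topY' measY' ρ ψ σ' := by
  classical
  -- basic facts about the cocycle
  have hσ1 : ∀ y : Y, σ 1 y = 1 := by
    intro y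
    have h := hσ 1 1 y
    simp only [one_mul, one_smul] at h
    exact (mul_eq_left.mp h.symm)
  -- encode Γ in ℕ
  have hΓne : Nonempty Γ := ⟨1⟩
  obtain ⟨ι, hι⟩ := Countable.exists_injective_nat Γ
  set d : ℕ → Γ := Function.invFun ι with hd_def
  have hdι : ∀ x : Γ, d (ι x) = x := Function.leftInverse_invFun hι
  -- embed Y into Cantor space
  obtain ⟨e, hemeas, heinj⟩ :=
    MeasurableSpace.measurable_injection_nat_bool_of_countablySeparated Y
  -- embed G into a compact subset of ℓ∞
  haveI := auxPolishOfCompactMetrizable G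
  haveI : T3Space G := by letI := TopologicalSpace.metrizableSpaceMetric G; infer_instance
  obtain ⟨j, hj⟩ := TopologicalSpace.exists_embedding_l_infty G
  let Gc : Type := Set.range j
  let h : G ≃ₜ Gc := hj.toHomeomorph
  haveI : CompactSpace Gc := isCompact_iff_compactSpace.mp (isCompact_range hj.continuous)
  letI : MeasurableSpace Gc := borel Gc
  haveI : BorelSpace Gc := ⟨rfl⟩
  haveI : PolishSpace Gc := auxPolishOfCompactMetrizable Gc
  -- the ambient compact metrizable space
  let K : Type := ℕ → Bool
  let A : Type := (ℕ → K) × (ℕ → Gc)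
  haveI : PolishSpace A := auxPolishOfCompactMetrizable A
  haveI : BorelSpace A := inferInstance
  -- the embedding of Y and the action
  let ψA : Y → A := fun y => (fun n => e (d n • y), fun n => h (σ (d n) y))
  let ρA : Γ → A → A := fun γ p =>
    (fun n => p.1 (ι (d n * γ)),
     fun n => h ((h.symm (p.2 (ι (d n * γ)))) * ((d n) • (h.symm (p.2 (ι γ))))⁻¹))
  have hρAcont : ∀ γ : Γ, Continuous (ρA γ) := by
    intro γ
    refine Continuous.prodMk (continuous_pi fun n => ?_) (continuous_pi fun n => ?_)
    · show Continuous ((fun c : ℕ → K => c (ι (d n * γ))) ∘ (Prod.fst : A → ℕ → K))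
      exact (continuous_apply _).comp continuous_fst
    · refine h.continuous.comp (Continuous.mul ?_ ?_)
      · have : Continuous ((fun c : ℕ → Gc => c (ι (d n * γ))) ∘ (Prod.snd : A → ℕ → Gc)) :=
          (continuous_apply _).comp continuous_snd
        exact h.symm.continuous.comp this
      · have : Continuous ((fun c : ℕ → Gc => c (ι γ)) ∘ (Prod.snd : A → ℕ → Gc)) :=
          (continuous_apply _).comp continuous_snd
        exact ((hGcont (d n)).comp (h.symm.continuous.comp this)).inv
  -- key equivariance
  have hkey : ∀ (γ : Γ) (y : Y), ρA γ (ψA y) = ψA (γ • y) := by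
    intro γ y
    refine Prod.ext (funext fun n => ?_) (funext fun n => ?_)
    · simp only [ρA, ψA, hdι, mul_smul]
    · simp only [ρA, ψA, hdι, Homeomorph.symm_apply_apply]
      congr 1
      have := hσ (d n) γ y
      rw [eq_comm, ← eq_mul_inv_iff_mul_eq] at this
      exact this.symm
  -- composition law on all of A
  have hρAcomp : ∀ (γ₁ γ₂ : Γ) (p : A), ρA (γ₁ * γ₂) p = ρA γ₁ (ρA γ₂ p) := by
    intro γ₁ γ₂ p
    refine Prod.ext (funext fun n => ?_) (funext fun n => ?_)
    · simp only [ρA, hdι, mul_assoc]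
    · simp only [ρA, hdι, Homeomorph.symm_apply_apply, mul_assoc, smul_mul', smul_inv',
        ← mul_smul]
      congr 1
      group
  -- the model space
  let S : Set A := Set.range ψA
  let Yc : Set A := closure S
  have hρA_maps : ∀ γ : Γ, ∀ p ∈ Yc, ρA γ p ∈ Yc := by
    intro γ p hp
    have h1 : ρA γ '' S ⊆ S := by
      rintro _ ⟨_, ⟨y, rfl⟩, rfl⟩
      exact ⟨γ • y, (hkey γ y).symm⟩
    have h2 : ρA γ '' Yc ⊆ Yc :=
      (image_closure_subset_closure_image (hρAcont γ)).trans (closure_mono h1)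
    exact h2 ⟨p, hp, rfl⟩
  -- closed conditions satisfied on Yc
  have hgood : ∀ p ∈ Yc, (∀ n, p.1 (ι (d n)) = p.1 n ∧ p.2 (ι (d n)) = p.2 n) ∧
      p.2 (ι 1) = h 1 := by
    intro p hp
    set T : Set A := (⋂ n : ℕ, {p : A | p.1 (ι (d n)) = p.1 n ∧ p.2 (ι (d n)) = p.2 n}) ∩
        {p : A | p.2 (ι 1) = h 1} with hT_def
    have hcl : IsClosed T := by
      apply IsClosed.inter
      · refine isClosed_iInter fun n => IsClosed.inter ?_ ?_
        · exact isClosed_eq (Continuous.comp (continuous_apply _)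
            (continuous_fst : Continuous (Prod.fst : A → ℕ → K)))
            (Continuous.comp (continuous_apply _)
            (continuous_fst : Continuous (Prod.fst : A → ℕ → K)))
        · exact isClosed_eq (Continuous.comp (continuous_apply _)
            (continuous_snd : Continuous (Prod.snd : A → ℕ → Gc)))
            (Continuous.comp (continuous_apply _)
            (continuous_snd : Continuous (Prod.snd : A → ℕ → Gc)))
      · exact isClosed_eq (Continuous.comp (continuous_apply _)
          (continuous_snd : Continuous (Prod.snd : A → ℕ → Gc))) continuous_const
    have hS : S ⊆ T := by
      rintro _ ⟨y, rfl⟩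
      refine ⟨Set.mem_iInter.mpr fun n => ⟨?_, ?_⟩, ?_⟩
      · simp only [ψA, hdι]
      · simp only [ψA, hdι]
      · show (ψA y).2 (ι 1) = h 1
        simp only [ψA, hdι, hσ1]
    have hmem := closure_minimal hS hcl hp
    obtain ⟨h1, h2⟩ := hmem
    exact ⟨fun n => Set.mem_iInter.mp h1 n, h2⟩
  -- instances for Y' := Yc
  haveI : PolishSpace Yc := isClosed_closure.polishSpace
  haveI : StandardBorelSpace Yc := inferInstance
  haveI : CompactSpace Yc := isCompact_iff_compactSpace.mp isClosed_closure.isCompact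
  -- definitions
  let ρ : Γ → Yc → Yc := fun γ p => ⟨ρA γ p.1, hρA_maps γ p.1 p.2⟩
  let ψ : Y → Yc := fun y => ⟨ψA y, subset_closure ⟨y, rfl⟩⟩
  let σ' : Γ → Yc → G := fun γ p => h.symm (p.1.2 (ι γ))
  have hψAmeas : Measurable ψA := by
    refine Measurable.prod (measurable_pi_lambda _ fun n => ?_)
      (measurable_pi_lambda _ fun n => ?_)
    · exact hemeas.comp (hmeas (d n))
    · exact (h.continuous.measurable).comp (hσmeas (d n))
  have hψmeas : Measurable ψ := hψAmeas.subtype_mk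
  have hψinj : Function.Injective ψ := by
    intro y₁ y₂ hyy
    have := congrArg (fun q : Yc => q.1.1 (ι 1)) hyy
    simp only [ψ, ψA, hdι, one_smul] at this
    exact heinj this
  have hψemb : MeasurableEmbedding ψ := hψmeas.measurableEmbedding hψinj
  have hequiv : ∀ (γ : Γ) (y : Y), ψ (γ • y) = ρ γ (ψ y) := by
    intro γ y
    exact Subtype.ext (hkey γ y).symm
  refine ⟨Yc, inferInstance, inferInstance, ρ, ψ, σ', ?_⟩
  refine ⟨inferInstance, inferInstance, inferInstance, ?_, ?_, ?_, hψinj, hψmeas, hequiv,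
    ?_, ?_, ?_, ?_, ?_, ?_, ?_, ?_⟩
  · -- continuity of ρ γ
    intro γ
    exact Continuous.subtype_mk ((hρAcont γ).comp continuous_subtype_val) _
  · -- ρ 1 = id
    funext p
    obtain ⟨hT, h1⟩ := hgood p.1 p.2
    refine Subtype.ext (Prod.ext (funext fun n => ?_) (funext fun n => ?_))
    · simp only [ρ, ρA, mul_one]
      exact (hT n).1
    · simp only [ρ, ρA, mul_one, h1, Homeomorph.symm_apply_apply, smul_one, inv_one,
        Homeomorph.apply_symm_apply, id_eq]
      exact (hT n).2
  · -- composition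
    intro γ₁ γ₂
    funext p
    exact Subtype.ext (hρAcomp γ₁ γ₂ p.1)
  · -- range measurable
    exact hψemb.measurableSet_range
  · -- dense range
    intro p
    have himg : Subtype.val '' (Set.range ψ) = S := by
      ext q
      constructor
      · rintro ⟨_, ⟨y, rfl⟩, rfl⟩; exact ⟨y, rfl⟩
      · rintro ⟨y, rfl⟩; exact ⟨ψ y, ⟨y, rfl⟩, rfl⟩
    have : (p : A) ∈ closure (Subtype.val '' (Set.range ψ)) := by
      rw [himg]; exact p.2
    exact closure_subtype.mpr this
  · -- images measurable
    intro s hs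
    exact hψemb.measurableSet_image.mpr hs
  · exact Measure.isProbabilityMeasure_map hψmeas.aemeasurable
  · -- invariance
    intro γ
    have hργmeas : Measurable (ρ γ) :=
      (Continuous.subtype_mk ((hρAcont γ).comp continuous_subtype_val) _).measurable
    rw [Measure.map_map hργmeas hψmeas]
    have : (ρ γ) ∘ ψ = ψ ∘ (fun y : Y => γ • y) := by
      funext y; exact (hequiv γ y).symm
    rw [this, ← Measure.map_map hψmeas (hmeas γ), (hmp γ).map_eq]
  · -- continuity of σ'
    intro γ
    have : Continuous ((fun c : ℕ → Gc => c (ι γ)) ∘ ((Prod.snd : A → ℕ → Gc) ∘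
        (Subtype.val : Yc → A))) :=
      (continuous_apply _).comp (continuous_snd.comp continuous_subtype_val)
    exact h.symm.continuous.comp this
  · -- cocycle identity
    intro γ₁ γ₂ p
    simp only [σ', ρ, ρA, hdι, Homeomorph.symm_apply_apply]
    group
  · -- extension
    intro γ y
    simp only [σ', ψ, ψA, hdι, Homeomorph.symm_apply_apply]
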